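/- arXiv:1304.5669 — 4 statements merged into one kernel-verified Lean document; each statement's English description precedes it below -/
import Mathlib

section
/- There is a parity-preserving bijection between standard Young tableaux of rectangular shape 2×r and lattice paths in an r×r grid staying weakly above the diagonal, such that the parity (as a permutation of {1,...,2r}) of the row reading word of the tableau equals the parity of the area above the corresponding lattice path. -/
/-- Standard Young tableaux of rectangular shape `2 × r`, encoded as bijective fillings
`T : Fin 2 × Fin r → Fin (2r)` (entry `T (i, j)` is the entry in row `i`, column `j`,
with entries `0, ..., 2r-1` standing for `1, ..., 2r`) that increase along rows and
down columns. -/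
def SYT2 (r : ℕ) : Finset ((Fin 2 × Fin r) → Fin (2 * r)) :=
  Finset.univ.filter (fun T => Function.Bijective T ∧
    (∀ i : Fin 2, ∀ j j' : Fin r, j < j' → T (i, j) < T (i, j')) ∧
    (∀ j : Fin r, T (0, j) < T (1, j)))

/-- The row reading word of a `2 × r` tableau: the first row read left to right, followed by
the second row read left to right, regarded as a permutation of `Fin (2r)`. -/
def readWord {r : ℕ} (T : (Fin 2 × Fin r) → Fin (2 * r)) : Fin (2 * r) → Fin (2 * r) :=
  fun k =>
    if h : (k : ℕ) < r then T (0, ⟨k, h⟩)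
    else T (1, ⟨(k : ℕ) - r, by have := k.isLt; omega⟩)

/-- The number of inversions of the reading word. -/
def invWord {r : ℕ} (T : (Fin 2 × Fin r) → Fin (2 * r)) : ℕ :=
  (Finset.univ.filter
    (fun p : Fin (2 * r) × Fin (2 * r) => p.1 < p.2 ∧ readWord T p.2 < readWord T p.1)).card

/-- Dyck-type lattice paths in an `r × r` grid staying weakly above the diagonal. -/
def dyckSet (r : ℕ) : Finset (Fin (2 * r) → Bool) :=
  Finset.univ.filter (fun f =>
    (Finset.univ.filter (fun i => f i = true)).card = r ∧
    ∀ k : Fin (2 * r),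
      (Finset.univ.filter (fun i => i ≤ k ∧ f i = false)).card ≤
        (Finset.univ.filter (fun i => i ≤ k ∧ f i = true)).card)

/-- The area above the path: number of pairs (down step, later right step). -/
def areaAbove {r : ℕ} (f : Fin (2 * r) → Bool) : ℕ :=
  (Finset.univ.filter
    (fun p : Fin (2 * r) × Fin (2 * r) => p.1 < p.2 ∧ f p.1 = false ∧ f p.2 = true)).card

namespace SYTaux

open Finset

variable {r : ℕ}

def toPath (T : (Fin 2 × Fin r) → Fin (2 * r)) : Fin (2 * r) → Bool :=
  fun k => decide (∃ j : Fin r, T (0, j) = k)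

lemma mem_SYT2_iff {T : (Fin 2 × Fin r) → Fin (2 * r)} :
    T ∈ SYT2 r ↔ Function.Bijective T ∧
      (∀ i : Fin 2, ∀ j j' : Fin r, j < j' → T (i, j) < T (i, j')) ∧
      (∀ j : Fin r, T (0, j) < T (1, j)) := by
  simp [SYT2]

lemma mem_dyck_iff {f : Fin (2 * r) → Bool} :
    f ∈ dyckSet r ↔ (Finset.univ.filter (fun i => f i = true)).card = r ∧
    ∀ k : Fin (2 * r),
      (Finset.univ.filter (fun i => i ≤ k ∧ f i = false)).card ≤
        (Finset.univ.filter (fun i => i ≤ k ∧ f i = true)).card := by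
  simp [dyckSet]

lemma fin2cases (i : Fin 2) : i = 0 ∨ i = 1 := by revert i; decide

lemma toPath_row0 (T : (Fin 2 × Fin r) → Fin (2 * r)) (j : Fin r) :
    toPath T (T (0, j)) = true := by
  simp only [toPath, decide_eq_true_eq]
  exact ⟨j, rfl⟩

lemma toPath_row1 {T : (Fin 2 × Fin r) → Fin (2 * r)} (hinj : Function.Injective T)
    (j : Fin r) : toPath T (T (1, j)) = false := by
  simp only [toPath, decide_eq_false_iff_not]
  rintro ⟨j', hj'⟩
  have := hinj hj'
  simp at this

lemma toPath_false_iff {T : (Fin 2 × Fin r) → Fin (2 * r)} (hbij : Function.Bijective T)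
    (k : Fin (2 * r)) : toPath T k = false ↔ ∃ j : Fin r, T (1, j) = k := by
  constructor
  · intro hk
    obtain ⟨⟨i, j⟩, rfl⟩ := hbij.2 k
    rcases fin2cases i with rfl | rfl
    · rw [toPath_row0] at hk; exact absurd hk (by simp)
    · exact ⟨j, rfl⟩
  · rintro ⟨j, rfl⟩
    exact toPath_row1 hbij.1 j

lemma toPath_true_iff {T : (Fin 2 × Fin r) → Fin (2 * r)} :
    ∀ k, toPath T k = true ↔ ∃ j : Fin r, T (0, j) = k := by
  intro k; simp [toPath]

lemma row_inj {T : (Fin 2 × Fin r) → Fin (2 * r)} (hinj : Function.Injective T) (i : Fin 2) :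
    Function.Injective (fun j : Fin r => T (i, j)) := by
  intro a b h
  have := hinj h
  simpa using this

lemma toPath_mem {T : (Fin 2 × Fin r) → Fin (2 * r)} (hT : T ∈ SYT2 r) :
    toPath T ∈ dyckSet r := by
  obtain ⟨hbij, hrow, hcol⟩ := mem_SYT2_iff.mp hT
  rw [mem_dyck_iff]
  constructor
  · have h1 : (Finset.univ.filter (fun i => toPath T i = true)) =
        Finset.univ.image (fun j : Fin r => T (0, j)) := by
      ext k
      simp only [mem_filter, mem_univ, true_and, mem_image, toPath_true_iff]
    rw [h1, card_image_of_injective _ (row_inj hbij.1 0), card_univ, Fintype.card_fin]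
  · intro k
    have hF : (Finset.univ.filter (fun i => i ≤ k ∧ toPath T i = false)) =
        (Finset.univ.filter (fun j : Fin r => T (1, j) ≤ k)).image (fun j => T (1, j)) := by
      ext x
      simp only [mem_filter, mem_univ, true_and, mem_image, toPath_false_iff hbij]
      constructor
      · rintro ⟨hx, j, rfl⟩; exact ⟨j, hx, rfl⟩
      · rintro ⟨j, hj, rfl⟩; exact ⟨hj, j, rfl⟩
    have hTt : (Finset.univ.filter (fun i => i ≤ k ∧ toPath T i = true)) =
        (Finset.univ.filter (fun j : Fin r => T (0, j) ≤ k)).image (fun j => T (0, j)) := by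
      ext x
      simp only [mem_filter, mem_univ, true_and, mem_image, toPath_true_iff]
      constructor
      · rintro ⟨hx, j, rfl⟩; exact ⟨j, hx, rfl⟩
      · rintro ⟨j, hj, rfl⟩; exact ⟨hj, j, rfl⟩
    rw [hF, hTt, card_image_of_injective _ (row_inj hbij.1 1),
      card_image_of_injective _ (row_inj hbij.1 0)]
    apply card_le_card
    intro j hj
    simp only [mem_filter, mem_univ, true_and] at hj ⊢
    exact le_trans (le_of_lt (hcol j)) hj

lemma dyck_card_false {f : Fin (2 * r) → Bool} (hf : f ∈ dyckSet r) :
    (Finset.univ.filter (fun i => f i = false)).card = r := by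
  obtain ⟨h1, _⟩ := mem_dyck_iff.mp hf
  have := Finset.card_filter_add_card_filter_not
    (s := (Finset.univ : Finset (Fin (2 * r)))) (p := fun i => f i = true)
  have h2 : (Finset.univ.filter (fun i => ¬ f i = true)) =
      (Finset.univ.filter (fun i => f i = false)) := by
    apply filter_congr; intro i _; simp
  rw [h2, card_univ, Fintype.card_fin, h1] at this
  omega

/-- Reconstruct the tableau from a path. -/
def ofPath (f : Fin (2 * r) → Bool)
    (h0 : (Finset.univ.filter (fun i => f i = true)).card = r)
    (h1 : (Finset.univ.filter (fun i => f i = false)).card = r) :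
    (Fin 2 × Fin r) → Fin (2 * r) :=
  fun p => if p.1 = 0 then (Finset.univ.filter (fun i => f i = true)).orderEmbOfFin h0 p.2
           else (Finset.univ.filter (fun i => f i = false)).orderEmbOfFin h1 p.2

lemma exists_emb_eq {s : Finset (Fin (2 * r))} (h : s.card = r) {x : Fin (2 * r)}
    (hx : x ∈ s) : ∃ i : Fin r, s.orderEmbOfFin h i = x := by
  have := Finset.range_orderEmbOfFin s h
  have hx' : x ∈ (s : Set (Fin (2 * r))) := hx
  rw [← this] at hx'
  exact hx'

lemma ofPath_mem {f : Fin (2 * r) → Bool} (hf : f ∈ dyckSet r)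
    (h0 : (Finset.univ.filter (fun i => f i = true)).card = r)
    (h1 : (Finset.univ.filter (fun i => f i = false)).card = r) :
    ofPath f h0 h1 ∈ SYT2 r := by
  obtain ⟨_, hdy⟩ := mem_dyck_iff.mp hf
  have hmem0 : ∀ i, f ((Finset.univ.filter (fun i => f i = true)).orderEmbOfFin h0 i) = true :=
    fun i => (mem_filter.mp (Finset.orderEmbOfFin_mem _ h0 i)).2
  have hmem1 : ∀ i, f ((Finset.univ.filter (fun i => f i = false)).orderEmbOfFin h1 i) = false :=
    fun i => (mem_filter.mp (Finset.orderEmbOfFin_mem _ h1 i)).2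
  -- column inequality
  have hcol : ∀ j : Fin r, (Finset.univ.filter (fun i => f i = true)).orderEmbOfFin h0 j <
      (Finset.univ.filter (fun i => f i = false)).orderEmbOfFin h1 j := by
    intro j
    have hfle : (j : ℕ) + 1 ≤ (Finset.univ.filter (fun i =>
        i ≤ (Finset.univ.filter (fun i => f i = false)).orderEmbOfFin h1 j ∧
        f i = false)).card := by
      have hsub : (Finset.Iic j).image
          (fun i => (Finset.univ.filter (fun i => f i = false)).orderEmbOfFin h1 i) ⊆
          Finset.univ.filter (fun i =>
            i ≤ (Finset.univ.filter (fun i => f i = false)).orderEmbOfFin h1 j ∧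
            f i = false) := by
        intro x hx
        simp only [mem_image, Finset.mem_Iic] at hx
        obtain ⟨i, hij, rfl⟩ := hx
        simp only [mem_filter, mem_univ, true_and]
        exact ⟨((Finset.univ.filter (fun i => f i = false)).orderEmbOfFin h1).monotone hij,
          hmem1 i⟩
      have := card_le_card hsub
      rwa [card_image_of_injective _
        ((Finset.univ.filter (fun i => f i = false)).orderEmbOfFin h1).injective,
        Fin.card_Iic] at this
    have htle := le_trans hfle
      (hdy ((Finset.univ.filter (fun i => f i = false)).orderEmbOfFin h1 j))
    have hle : (Finset.univ.filter (fun i => f i = true)).orderEmbOfFin h0 j ≤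
        (Finset.univ.filter (fun i => f i = false)).orderEmbOfFin h1 j := by
      by_contra hcon
      push_neg at hcon
      have hsub : (Finset.univ.filter (fun i =>
            i ≤ (Finset.univ.filter (fun i => f i = false)).orderEmbOfFin h1 j ∧
            f i = true)) ⊆
          (Finset.Iio j).image
          (fun i => (Finset.univ.filter (fun i => f i = true)).orderEmbOfFin h0 i) := by
        intro x hx
        simp only [mem_filter, mem_univ, true_and] at hx
        have hxs : x ∈ Finset.univ.filter (fun i => f i = true) := by
          rw [mem_filter]; exact ⟨mem_univ _, hx.2⟩
        obtain ⟨i, rfl⟩ := exists_emb_eq h0 hxs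
        simp only [mem_image, Finset.mem_Iio]
        refine ⟨i, ?_, rfl⟩
        by_contra hij
        push_neg at hij
        have hmono := ((Finset.univ.filter (fun i => f i = true)).orderEmbOfFin h0).monotone hij
        exact absurd (lt_of_le_of_lt (le_trans hmono hx.1) hcon) (lt_irrefl _)
      have hc := card_le_card hsub
      have hc2 : ((Finset.Iio j).image
          (fun i => (Finset.univ.filter (fun i => f i = true)).orderEmbOfFin h0 i)).card
          ≤ (j : ℕ) := by
        rw [card_image_of_injective _
          ((Finset.univ.filter (fun i => f i = true)).orderEmbOfFin h0).injective, Fin.card_Iio]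
      omega
    refine lt_of_le_of_ne hle ?_
    intro heq
    have hb1 := hmem1 j
    rw [← heq, hmem0 j] at hb1
    exact absurd hb1 (by simp)
  -- now membership
  rw [mem_SYT2_iff]
  refine ⟨?_, ?_, ?_⟩
  · rw [Fintype.bijective_iff_injective_and_card]
    constructor
    · rintro ⟨i, j⟩ ⟨i', j'⟩ h
      simp only [ofPath] at h
      rcases fin2cases i with rfl | rfl <;> rcases fin2cases i' with rfl | rfl <;>
        simp only [reduceIte, Fin.one_eq_zero_iff, OfNat.ofNat_ne_one, Nat.succ_ne_self,
          if_true, if_false] at h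
      · exact Prod.ext rfl (((Finset.univ.filter (fun i => f i = true)).orderEmbOfFin
          h0).injective h)
      · have := hmem1 j'
        rw [← h, hmem0 j] at this
        exact absurd this (by simp)
      · have := hmem1 j
        rw [h, hmem0 j'] at this
        exact absurd this (by simp)
      · exact Prod.ext rfl (((Finset.univ.filter (fun i => f i = false)).orderEmbOfFin
          h1).injective h)
    · simp only [Fintype.card_prod, Fintype.card_fin]
  · intro i j j' hjj
    rcases fin2cases i with rfl | rfl <;>
      simp only [ofPath, reduceIte, Fin.one_eq_zero_iff, OfNat.ofNat_ne_one, Nat.succ_ne_self,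
        if_true, if_false]
    · exact ((Finset.univ.filter (fun i => f i = true)).orderEmbOfFin h0).strictMono hjj
    · exact ((Finset.univ.filter (fun i => f i = false)).orderEmbOfFin h1).strictMono hjj
  · intro j
    simpa only [ofPath, reduceIte, Fin.one_eq_zero_iff, OfNat.ofNat_ne_one, Nat.succ_ne_self,
      if_true, if_false] using hcol j

lemma toPath_ofPath {f : Fin (2 * r) → Bool}
    (h0 : (Finset.univ.filter (fun i => f i = true)).card = r)
    (h1 : (Finset.univ.filter (fun i => f i = false)).card = r) :
    toPath (ofPath f h0 h1) = f := by
  funext k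
  have hmem0 : ∀ i, f ((Finset.univ.filter (fun i => f i = true)).orderEmbOfFin h0 i) = true :=
    fun i => (mem_filter.mp (Finset.orderEmbOfFin_mem _ h0 i)).2
  cases hk : f k
  · simp only [toPath, ofPath, reduceIte, decide_eq_false_iff_not]
    rintro ⟨j, hj⟩
    have := hmem0 j
    rw [hj, hk] at this
    exact absurd this (by simp)
  · simp only [toPath, ofPath, reduceIte, decide_eq_true_eq]
    have hks : k ∈ Finset.univ.filter (fun i => f i = true) := by
      rw [mem_filter]; exact ⟨mem_univ _, hk⟩
    exact exists_emb_eq h0 hks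

lemma ofPath_toPath {T : (Fin 2 × Fin r) → Fin (2 * r)} (hT : T ∈ SYT2 r)
    (h0 : (Finset.univ.filter (fun i => toPath T i = true)).card = r)
    (h1 : (Finset.univ.filter (fun i => toPath T i = false)).card = r) :
    ofPath (toPath T) h0 h1 = T := by
  obtain ⟨hbij, hrow, hcol⟩ := mem_SYT2_iff.mp hT
  have e0 : (fun j : Fin r => T (0, j)) =
      (Finset.univ.filter (fun i => toPath T i = true)).orderEmbOfFin h0 := by
    apply Finset.orderEmbOfFin_unique h0
    · intro j
      rw [mem_filter]
      exact ⟨mem_univ _, toPath_row0 T j⟩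
    · intro a b hab
      exact hrow 0 a b hab
  have e1 : (fun j : Fin r => T (1, j)) =
      (Finset.univ.filter (fun i => toPath T i = false)).orderEmbOfFin h1 := by
    apply Finset.orderEmbOfFin_unique h1
    · intro j
      rw [mem_filter]
      exact ⟨mem_univ _, toPath_row1 hbij.1 j⟩
    · intro a b hab
      exact hrow 1 a b hab
  funext p
  obtain ⟨i, j⟩ := p
  rcases fin2cases i with rfl | rfl
  · simp only [ofPath, reduceIte, if_true]
    exact (congrFun e0 j).symm
  · simp only [ofPath, reduceIte, Fin.one_eq_zero_iff, Nat.succ_ne_self, if_false]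
    exact (congrFun e1 j).symm

lemma readWord_bijective {T : (Fin 2 × Fin r) → Fin (2 * r)}
    (hbij : Function.Bijective T) : Function.Bijective (readWord T) := by
  rw [Fintype.bijective_iff_injective_and_card]
  refine ⟨?_, rfl⟩
  intro k k' h
  unfold readWord at h
  by_cases hk : (k : ℕ) < r <;> by_cases hk' : (k' : ℕ) < r
  · rw [dif_pos hk, dif_pos hk'] at h
    have := hbij.1 h
    simp only [Prod.mk.injEq, Fin.mk.injEq, true_and] at this
    exact Fin.ext this
  · rw [dif_pos hk, dif_neg hk'] at h
    have := hbij.1 h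
    simp at this
  · rw [dif_neg hk, dif_pos hk'] at h
    have := hbij.1 h
    simp at this
  · rw [dif_neg hk, dif_neg hk'] at h
    have := hbij.1 h
    simp only [Prod.mk.injEq, Fin.mk.injEq, true_and] at this
    have hkk := k.isLt
    have hkk' := k'.isLt
    apply Fin.ext
    omega

lemma invWord_eq_areaAbove {T : (Fin 2 × Fin r) → Fin (2 * r)} (hT : T ∈ SYT2 r) :
    invWord T = areaAbove (toPath T) := by
  obtain ⟨hbij, hrow, hcol⟩ := mem_SYT2_iff.mp hT
  have hW := readWord_bijective hbij
  set W := Equiv.ofBijective (readWord T) hW with hWdef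
  have hWa : ∀ x, W x = readWord T x := fun x => rfl
  -- positions of inversion pairs straddle the rows
  have hsplit : ∀ p : Fin (2 * r) × Fin (2 * r),
      p.1 < p.2 → readWord T p.2 < readWord T p.1 → (p.1 : ℕ) < r ∧ r ≤ (p.2 : ℕ) := by
    rintro ⟨p1, p2⟩ hlt hinv
    by_cases h2 : (p2 : ℕ) < r
    · have h1 : (p1 : ℕ) < r := lt_trans hlt h2
      rw [readWord, readWord, dif_pos h1, dif_pos h2] at hinv
      have := hrow 0 ⟨p1, h1⟩ ⟨p2, h2⟩ hlt
      exact absurd hinv (not_lt.mpr (le_of_lt this))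
    · by_cases h1 : (p1 : ℕ) < r
      · exact ⟨h1, not_lt.mp h2⟩
      · rw [readWord, readWord, dif_neg h1, dif_neg h2] at hinv
        have hp1 := p1.isLt
        have hp2 := p2.isLt
        have hlt' : (⟨(p1 : ℕ) - r, by omega⟩ : Fin r) < ⟨(p2 : ℕ) - r, by omega⟩ := by
          simp only [Fin.mk_lt_mk]
          have : (p1 : ℕ) < (p2 : ℕ) := hlt
          omega
        have := hrow 1 _ _ hlt'
        exact absurd hinv (not_lt.mpr (le_of_lt this))
  have hpos_true : ∀ x : Fin (2 * r), toPath T x = true → ((W.symm x : Fin (2 * r)) : ℕ) < r := by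
    intro x hx
    by_contra hge
    have h1 : readWord T (W.symm x) = x := W.apply_symm_apply x
    rw [readWord, dif_neg hge] at h1
    rw [← h1, toPath_row1 hbij.1] at hx
    exact absurd hx (by simp)
  have hpos_false : ∀ x : Fin (2 * r), toPath T x = false →
      r ≤ ((W.symm x : Fin (2 * r)) : ℕ) := by
    intro x hx
    by_contra hlt
    push_neg at hlt
    have h1 : readWord T (W.symm x) = x := W.apply_symm_apply x
    rw [readWord, dif_pos hlt] at h1
    rw [← h1, toPath_row0] at hx
    exact absurd hx (by simp)
  unfold invWord areaAbove
  apply Finset.card_nbij'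
    (i := fun p => (readWord T p.2, readWord T p.1))
    (j := fun q => (W.symm q.2, W.symm q.1))
  · rintro ⟨p1, p2⟩ hp
    simp only [Finset.mem_coe, mem_filter, mem_univ, true_and] at hp ⊢
    obtain ⟨hlt, hinv⟩ := hp
    obtain ⟨h1, h2⟩ := hsplit (p1, p2) hlt hinv
    refine ⟨hinv, ?_, ?_⟩
    · rw [readWord, dif_neg (not_lt.mpr h2)]
      exact toPath_row1 hbij.1 _
    · rw [readWord, dif_pos h1]
      exact toPath_row0 _ _
  · rintro ⟨q1, q2⟩ hq
    simp only [Finset.mem_coe, mem_filter, mem_univ, true_and] at hq ⊢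
    obtain ⟨hlt, hq1, hq2⟩ := hq
    constructor
    · have h1 := hpos_true q2 hq2
      have h2 := hpos_false q1 hq1
      exact Fin.mk_lt_mk.mpr (lt_of_lt_of_le h1 h2)
    · rw [show readWord T (W.symm q1) = q1 from W.apply_symm_apply q1,
        show readWord T (W.symm q2) = q2 from W.apply_symm_apply q2]
      exact hlt
  · rintro ⟨p1, p2⟩ _
    have e1 : W.symm (readWord T p1) = p1 := W.symm_apply_apply p1
    have e2 : W.symm (readWord T p2) = p2 := W.symm_apply_apply p2
    simp only [e1, e2]
  · rintro ⟨q1, q2⟩ _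
    have e1 : readWord T (W.symm q1) = q1 := W.apply_symm_apply q1
    have e2 : readWord T (W.symm q2) = q2 := W.apply_symm_apply q2
    simp only [e1, e2]

end SYTaux


/-- There is a bijection between standard Young tableaux of shape `2 × r` and lattice paths
in an `r × r` grid staying weakly above the diagonal, under which the parity of the row
reading word of the tableau equals the parity of the area above the path. -/
theorem stmt1 (r : ℕ) :
    ∃ e : {T // T ∈ SYT2 r} ≃ {f // f ∈ dyckSet r},
      ∀ T : {T // T ∈ SYT2 r}, (Even (invWord T.1) ↔ Even (areaAbove (e T).1)) := by
  classical
  refine ⟨⟨fun T => ⟨SYTaux.toPath T.1, SYTaux.toPath_mem T.2⟩,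
    fun f => ⟨SYTaux.ofPath f.1
        (SYTaux.mem_dyck_iff.mp f.2).1 (SYTaux.dyck_card_false f.2),
      SYTaux.ofPath_mem f.2 _ _⟩, ?_, ?_⟩, ?_⟩
  · rintro ⟨T, hT⟩
    simp only [Subtype.mk.injEq]
    exact SYTaux.ofPath_toPath hT _ _
  · rintro ⟨f, hf⟩
    simp only [Subtype.mk.injEq]
    exact SYTaux.toPath_ofPath _ _
  · rintro ⟨T, hT⟩
    simp only [Equiv.coe_fn_mk]
    rw [SYTaux.invWord_eq_areaAbove hT]
end

section
/- Let c ≥ 2 be even, m the identity of S_c, and n = c+1. Under the equivalence on S_n generated by cyclically permuting the letter-values of any contiguous increasing run of length c (i.e., replacing a contiguous factor whose standardization is a cyclic shift of the identity by another arrangement of the same letters whose standardization is a cyclic shift of the identity), all permutations of S_n that contain a contiguous factor of length c with standardization a cyclic shift of the identity form a single equivalence class. -/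
/-- The standardization (order permutation) of a word with distinct letters. -/
def stdz (w : List ℕ) : List ℕ :=
  w.map (fun x => 1 + w.countP (fun y => decide (y < x)))

/-- `u` is a cyclic shift of `m`. -/
def IsCyclicShiftOf (u m : List ℕ) : Prop := ∃ a ≤ m.length, u = m.rotate a

/-- One pattern-replacement move for the cyclic-shift relation attached to `m`. -/
def StepCyc (m : List ℕ) (φ ψ : List ℕ) : Prop :=
  ∃ a u v b : List ℕ, φ = a ++ u ++ b ∧ ψ = a ++ v ++ b ∧
    u.length = m.length ∧ u.Perm v ∧
    IsCyclicShiftOf (stdz u) m ∧ IsCyclicShiftOf (stdz v) m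

/-- `w` contains a contiguous factor of length `|m|` whose standardization is a cyclic
shift of `m`. -/
def NonAvoider (m w : List ℕ) : Prop :=
  ∃ i, i + m.length ≤ w.length ∧
    IsCyclicShiftOf (stdz ((w.drop i).take m.length)) m

lemma countP_lt_range' (a l z : ℕ) :
    (List.range' a l).countP (fun y => decide (y < z)) = min l (z - a) := by
  induction l generalizing a with
  | zero => simp
  | succ l ih =>
    rw [List.range'_succ, List.countP_cons, ih]
    by_cases h : a < z <;> simp [h] <;> omega

lemma map_range'_eq {f : ℕ → ℕ} {a b : ℕ} (l : ℕ) (h : ∀ i, i < l → f (a + i) = b + i) :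
    (List.range' a l).map f = List.range' b l := by
  induction l generalizing a b with
  | zero => simp
  | succ l ih =>
    rw [List.range'_succ, List.range'_succ, List.map_cons]
    refine congrArg₂ _ (by simpa using h 0 (by omega)) (ih fun i hi => ?_)
    have := h (i + 1) (by omega)
    rw [show a + 1 + i = a + (i + 1) by omega, this]
    omega

lemma range'_split (a l k : ℕ) (hk : k ≤ l) :
    List.range' a l = List.range' a k ++ List.range' (a + k) (l - k) := by
  have := List.range'_append (s := a) (m := k) (n := l - k) (step := 1)
  simp only [one_mul] at this
  rw [show k + (l - k) = l by omega] at this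
  exact this.symm

lemma rotate_range' (c k : ℕ) (hk : k ≤ c) :
    (List.range' 1 c).rotate k = List.range' (k + 1) (c - k) ++ List.range' 1 k := by
  have hsplit := range'_split 1 c k hk
  rw [show (1:ℕ) + k = k + 1 by omega] at hsplit
  rw [List.rotate_eq_drop_append_take (by simp; omega)]
  rw [hsplit, List.drop_left' (by simp), List.take_left' (by simp)]

lemma cyc_intro (c k : ℕ) (hk : k ≤ c) (u : List ℕ)
    (h : u = List.range' (k + 1) (c - k) ++ List.range' 1 k) :
    IsCyclicShiftOf u (List.range' 1 c) :=
  ⟨k, by simpa using hk, by rw [h, rotate_range' c k hk]⟩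

/- ### stdz computations -/

lemma S0 (c : ℕ) : stdz (List.range' 1 c) = List.range' 1 c := by
  unfold stdz
  apply map_range'_eq
  intro i hi
  simp only [countP_lt_range']
  omega

lemma S0' (c : ℕ) : stdz (List.range' 2 c) = List.range' 1 c := by
  unfold stdz
  apply map_range'_eq
  intro i hi
  simp only [countP_lt_range']
  omega

lemma S1 (c x : ℕ) (hx1 : 1 ≤ x) (hx : x ≤ c + 1) :
    stdz (List.range' (x + 1) (c + 1 - x) ++ List.range' 1 (x - 1)) =
      List.range' x (c + 1 - x) ++ List.range' 1 (x - 1) := by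
  unfold stdz
  rw [List.map_append]
  refine congrArg₂ _ ?_ ?_ <;>
    (apply map_range'_eq; intro i hi;
     simp only [List.countP_append, countP_lt_range']; omega)

lemma S3 (c x : ℕ) (hx1 : 1 ≤ x) (hx : x ≤ c) :
    stdz (List.range' (x + 2) (c - x) ++ List.range' 1 (x - 1) ++ List.range' (x + 1) 1) =
      List.range' (x + 1) (c - x) ++ List.range' 1 (x - 1) ++ List.range' x 1 := by
  unfold stdz
  rw [List.map_append, List.map_append]
  refine congrArg₂ _ (congrArg₂ _ ?_ ?_) ?_ <;>
    (apply map_range'_eq; intro i hi;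
     simp only [List.countP_append, countP_lt_range']; omega)

lemma S4 (c x : ℕ) (hx1 : 1 ≤ x) (hx : x ≤ c) :
    stdz (List.range' x 1 ++ List.range' (x + 2) (c - x) ++ List.range' 1 (x - 1)) =
      List.range' x 1 ++ List.range' (x + 1) (c - x) ++ List.range' 1 (x - 1) := by
  unfold stdz
  rw [List.map_append, List.map_append]
  refine congrArg₂ _ (congrArg₂ _ ?_ ?_) ?_ <;>
    (apply map_range'_eq; intro i hi;
     simp only [List.countP_append, countP_lt_range']; omega)

lemma S5a (c : ℕ) : stdz (List.range' 2 (c - 1) ++ List.range' 1 1) =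
    List.range' 2 (c - 1) ++ List.range' 1 1 := by
  unfold stdz
  rw [List.map_append]
  refine congrArg₂ _ ?_ ?_ <;>
    (apply map_range'_eq; intro i hi;
     simp only [List.countP_append, countP_lt_range']; omega)

lemma S5b (c : ℕ) (hc : 1 ≤ c) : stdz (List.range' (c + 1) 1 ++ List.range' 2 (c - 1)) =
    List.range' c 1 ++ List.range' 1 (c - 1) := by
  unfold stdz
  rw [List.map_append]
  refine congrArg₂ _ ?_ ?_ <;>
    (apply map_range'_eq; intro i hi;
     simp only [List.countP_append, countP_lt_range']; omega)

lemma S5c (c : ℕ) (hc : 1 ≤ c) : stdz (List.range' c 1 ++ List.range' 1 (c - 1)) =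
    List.range' c 1 ++ List.range' 1 (c - 1) := by
  unfold stdz
  rw [List.map_append]
  refine congrArg₂ _ ?_ ?_ <;>
    (apply map_range'_eq; intro i hi;
     simp only [List.countP_append, countP_lt_range']; omega)

/- ### canonical words -/

/-- The full rotation starting at `x`. -/
def Rw (c x : ℕ) : List ℕ := List.range' x (c + 2 - x) ++ List.range' 1 (x - 1)

/-- The bridge word `[x, x+2, ..., c+1, 1, ..., x-1, x+1]`. -/
def Bw (c x : ℕ) : List ℕ :=
  List.range' x 1 ++ (List.range' (x + 2) (c - x) ++ List.range' 1 (x - 1) ++ List.range' (x + 1) 1)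

/-- The bridge word `[c+1, 2, 3, ..., c, 1]`. -/
def Bn (c : ℕ) : List ℕ :=
  (List.range' (c + 1) 1 ++ List.range' 2 (c - 1)) ++ List.range' 1 1

lemma mkStep {m φ ψ : List ℕ} (a u v b : List ℕ) (hφ : φ = a ++ u ++ b)
    (hψ : ψ = a ++ v ++ b) (hl : u.length = m.length) (hp : u.Perm v)
    (hu : IsCyclicShiftOf (stdz u) m) (hv : IsCyclicShiftOf (stdz v) m) :
    StepCyc m φ ψ := ⟨a, u, v, b, hφ, hψ, hl, hp, hu, hv⟩

lemma Rw_perm (c x : ℕ) (hx1 : 1 ≤ x) (hx : x ≤ c + 1) :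
    (Rw c x).Perm (List.range' 1 (c + 1)) := by
  unfold Rw
  refine List.perm_append_comm.trans ?_
  rw [range'_split 1 (c + 1) (x - 1) (by omega), show 1 + (x - 1) = x by omega,
    show c + 1 - (x - 1) = c + 2 - x by omega]

/- step1 : Rw x → Bw x  (within the class of words with first letter x), for 1 ≤ x ≤ c -/
lemma step1 (c x : ℕ) (hx1 : 1 ≤ x) (hx : x ≤ c) :
    StepCyc (List.range' 1 c) (Rw c x) (Bw c x) := by
  refine mkStep (List.range' x 1)
    (List.range' (x + 1) (c + 1 - x) ++ List.range' 1 (x - 1))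
    (List.range' (x + 2) (c - x) ++ List.range' 1 (x - 1) ++ List.range' (x + 1) 1)
    [] ?_ ?_ (by simp; omega) ?_ ?_ ?_
  · unfold Rw
    rw [range'_split x (c + 2 - x) 1 (by omega), show x + 1 = x + 1 by rfl,
      show c + 2 - x - 1 = c + 1 - x by omega]
    simp [List.append_assoc]
  · unfold Bw
    simp [List.append_assoc]
  · -- Perm
    rw [range'_split (x + 1) (c + 1 - x) 1 (by omega),
       show x + 1 + 1 = x + 2 by omega, show c + 1 - x - 1 = c - x by omega]
    simpa [List.append_assoc] using
      (List.perm_append_comm (l₁ := List.range' (x+1) 1)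
        (l₂ := List.range' (x+2) (c-x) ++ List.range' 1 (x-1)))
  · refine cyc_intro c (x - 1) (by omega) _ ?_
    rw [S1 c x hx1 (by omega)]
    congr 2 <;> omega
  · refine cyc_intro c x (by omega) _ ?_
    rw [S3 c x hx1 hx]
    rw [range'_split 1 x (x - 1) (by omega), show 1 + (x - 1) = x by omega,
      show x - (x - 1) = 1 by omega]
    simp [List.append_assoc]

/- step2 : Bw x → Rw (x+2)  (within the class of words with last letter x+1), for 1 ≤ x ≤ c-1 -/
lemma step2 (c x : ℕ) (hx1 : 1 ≤ x) (hx : x ≤ c - 1) (hc : 2 ≤ c) :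
    StepCyc (List.range' 1 c) (Bw c x) (Rw c (x + 2)) := by
  refine mkStep []
    (List.range' x 1 ++ List.range' (x + 2) (c - x) ++ List.range' 1 (x - 1))
    (List.range' (x + 2) (c - x) ++ List.range' 1 x)
    (List.range' (x + 1) 1) ?_ ?_ (by simp; omega) ?_ ?_ ?_
  · unfold Bw
    simp [List.append_assoc]
  · unfold Rw
    rw [show c + 2 - (x + 2) = c - x by omega, show x + 2 - 1 = x + 1 by omega,
      range'_split 1 (x + 1) x (by omega), show 1 + x = x + 1 by omega,
      show x + 1 - x = 1 by omega]
    simp [List.append_assoc]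
  · -- Perm
    rw [range'_split 1 x (x - 1) (by omega), show 1 + (x - 1) = x by omega,
      show x - (x - 1) = 1 by omega]
    simpa [List.append_assoc] using
      (List.perm_append_comm (l₁ := List.range' x 1)
        (l₂ := List.range' (x+2) (c-x) ++ List.range' 1 (x-1)))
  · refine cyc_intro c (x - 1) (by omega) _ ?_
    rw [S4 c x hx1 (by omega)]
    rw [show x - 1 + 1 = x by omega, show c - (x - 1) = c + 1 - x by omega,
      range'_split x (c + 1 - x) 1 (by omega), show c + 1 - x - 1 = c - x by omega]
  · refine cyc_intro c x (by omega) _ ?_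
    have := S1 c (x + 1) (by omega) (by omega)
    rw [show x + 1 + 1 = x + 2 by omega, show c + 1 - (x + 1) = c - x by omega,
      show x + 1 - 1 = x by omega] at this
    rw [this]

/- step2' : Bw c → Rw 1 -/
lemma step2' (c : ℕ) (hc : 2 ≤ c) :
    StepCyc (List.range' 1 c) (Bw c c) (Rw c 1) := by
  refine mkStep []
    (List.range' c 1 ++ List.range' 1 (c - 1))
    (List.range' 1 c)
    (List.range' (c + 1) 1) ?_ ?_ (by simp; omega) ?_ ?_ ?_
  · unfold Bw
    rw [show c - c = 0 by omega]
    simp [List.append_assoc]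
  · unfold Rw
    rw [show c + 2 - 1 = c + 1 by omega, show (1:ℕ) - 1 = 0 by rfl,
      range'_split 1 (c + 1) c (by omega), show 1 + c = c + 1 by omega,
      show c + 1 - c = 1 by omega]
    simp
  · rw [range'_split 1 c (c - 1) (by omega), show 1 + (c - 1) = c by omega,
      show c - (c - 1) = 1 by omega]
    exact List.perm_append_comm
  · refine cyc_intro c (c - 1) (by omega) _ ?_
    rw [S5c c (by omega), show c - 1 + 1 = c by omega, show c - (c - 1) = 1 by omega]
  · refine cyc_intro c 0 (by omega) _ ?_
    rw [S0 c]
    simp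

/- stepN1 : Rw (c+1) → Bn -/
lemma stepN1 (c : ℕ) (hc : 2 ≤ c) :
    StepCyc (List.range' 1 c) (Rw c (c + 1)) (Bn c) := by
  refine mkStep (List.range' (c + 1) 1)
    (List.range' 1 c)
    (List.range' 2 (c - 1) ++ List.range' 1 1)
    [] ?_ ?_ (by simp) ?_ ?_ ?_
  · unfold Rw
    rw [show c + 2 - (c + 1) = 1 by omega, show c + 1 - 1 = c by omega]
    simp
  · unfold Bn
    simp [List.append_assoc]
  · rw [range'_split 1 c 1 (by omega), show (1:ℕ) + 1 = 2 by rfl]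
    exact List.perm_append_comm
  · refine cyc_intro c 0 (by omega) _ ?_
    rw [S0 c]
    simp
  · refine cyc_intro c 1 (by omega) _ ?_
    rw [S5a c]

/- stepN2 : Bn → Rw 2 -/
lemma stepN2 (c : ℕ) (hc : 2 ≤ c) :
    StepCyc (List.range' 1 c) (Bn c) (Rw c 2) := by
  refine mkStep []
    (List.range' (c + 1) 1 ++ List.range' 2 (c - 1))
    (List.range' 2 c)
    (List.range' 1 1) ?_ ?_ (by simp; omega) ?_ ?_ ?_
  · unfold Bn
    simp [List.append_assoc]
  · unfold Rw
    rw [show c + 2 - 2 = c by omega, show (2:ℕ) - 1 = 1 by rfl]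
    simp
  · rw [range'_split 2 c (c - 1) (by omega), show 2 + (c - 1) = c + 1 by omega,
      show c - (c - 1) = 1 by omega]
    exact List.perm_append_comm.trans (by rfl)
  · refine cyc_intro c (c - 1) (by omega) _ ?_
    rw [S5b c (by omega), show c - 1 + 1 = c by omega, show c - (c - 1) = 1 by omega]
  · refine cyc_intro c 0 (by omega) _ ?_
    rw [S0' c]
    simp

/- ### connectivity -/

lemma dstep (c x y : ℕ) (hc : 2 ≤ c) (h1 : 1 ≤ x) (h2 : x ≤ c + 1) (hy1 : 1 ≤ y)
    (hy2 : y ≤ c + 1) (hxy : x + 2 = y ∨ x + 2 = y + (c + 1)) :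
    Relation.EqvGen (StepCyc (List.range' 1 c)) (Rw c x) (Rw c y) := by
  by_cases hx : x ≤ c - 1
  · have hyx : y = x + 2 := by omega
    subst hyx
    exact Relation.EqvGen.trans _ _ _
      (Relation.EqvGen.rel _ _ (step1 c x h1 (by omega)))
      (Relation.EqvGen.rel _ _ (step2 c x h1 hx hc))
  · by_cases hxc : x = c
    · have hyx : y = 1 := by omega
      subst hyx; rw [hxc]
      exact Relation.EqvGen.trans _ _ _
        (Relation.EqvGen.rel _ _ (step1 c c (by omega) le_rfl))
        (Relation.EqvGen.rel _ _ (step2' c hc))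
    · have hxx : x = c + 1 := by omega
      have hyx : y = 2 := by omega
      subst hyx; rw [hxx]
      exact Relation.EqvGen.trans _ _ _
        (Relation.EqvGen.rel _ _ (stepN1 c hc))
        (Relation.EqvGen.rel _ _ (stepN2 c hc))

lemma reach (c : ℕ) (hc : 2 ≤ c) (k : ℕ) :
    Relation.EqvGen (StepCyc (List.range' 1 c)) (Rw c 1) (Rw c (2 * k % (c + 1) + 1)) := by
  induction k with
  | zero =>
    rw [show 2 * 0 % (c + 1) + 1 = 1 by simp]
    exact Relation.EqvGen.refl _
  | succ k ih =>
    set t := 2 * k % (c + 1) with htdef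
    have ht : t < c + 1 := Nat.mod_lt _ (by omega)
    have hmod : 2 * (k + 1) % (c + 1) = (t + 2) % (c + 1) := by
      conv_lhs => rw [show 2 * (k + 1) = 2 * k + 2 by ring]
      rw [Nat.add_mod, htdef, Nat.mod_eq_of_lt (show 2 < c + 1 by omega)]
    have key : (t + 2) % (c + 1) = t + 2 ∨ (t + 2) % (c + 1) + (c + 1) = t + 2 := by
      by_cases h : t + 2 < c + 1
      · left; exact Nat.mod_eq_of_lt h
      · right
        rw [Nat.mod_eq_sub_mod (by omega), Nat.mod_eq_of_lt (by omega)]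
        omega
    have hlt : 2 * (k + 1) % (c + 1) < c + 1 := Nat.mod_lt _ (by omega)
    refine ih.trans _ _ _
      (dstep c (t + 1) (2 * (k + 1) % (c + 1) + 1) hc (by omega) (by omega) (by omega)
        (by omega) ?_)
    rw [hmod]
    omega

lemma reachAll (c : ℕ) (hc : 2 ≤ c) (hce : Even c) (x : ℕ) (h1 : 1 ≤ x) (h2 : x ≤ c + 1) :
    Relation.EqvGen (StepCyc (List.range' 1 c)) (Rw c 1) (Rw c x) := by
  obtain ⟨t, ht⟩ := hce
  have h2k : 2 * ((x - 1) * (t + 1)) = (x - 1) + (x - 1) * (c + 1) := by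
    rw [ht]; ring
  have hmod : 2 * ((x - 1) * (t + 1)) % (c + 1) = x - 1 := by
    rw [h2k, Nat.add_mul_mod_self_right, Nat.mod_eq_of_lt (by omega)]
  have := reach c hc ((x - 1) * (t + 1))
  rwa [hmod, show x - 1 + 1 = x by omega] at this

lemma perm_cancel_right {u v : List ℕ} (y : ℕ) (h : (u ++ [y]).Perm (v ++ [y])) :
    u.Perm v := by
  have h1 : ([y] ++ u).Perm ([y] ++ v) :=
    (List.perm_append_comm.trans h).trans List.perm_append_comm
  simpa using (List.perm_cons y).mp (by simpa using h1)

lemma toCanon (c : ℕ) (hc : 2 ≤ c) (w : List ℕ) (hw : w.Perm (List.range' 1 (c + 1)))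
    (hnw : NonAvoider (List.range' 1 c) w) :
    ∃ x, 1 ≤ x ∧ x ≤ c + 1 ∧
      Relation.EqvGen (StepCyc (List.range' 1 c)) w (Rw c x) := by
  have hlen : w.length = c + 1 := by rw [hw.length_eq]; simp
  obtain ⟨i, hi, hcyc⟩ := hnw
  simp only [List.length_range'] at hi hcyc
  rw [hlen] at hi
  have hi' : i = 0 ∨ i = 1 := by omega
  rcases hi' with rfl | rfl
  · -- suffix case : first c letters form the cyclic factor
    obtain ⟨y, hy⟩ := List.length_eq_one_iff.mp (show (w.drop c).length = 1 by simp [hlen])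
    have hwdec : w = w.take c ++ [y] := by
      conv_lhs => rw [← List.take_append_drop c w]
      rw [hy]
    have hcyc' : IsCyclicShiftOf (stdz (w.take c)) (List.range' 1 c) := by
      simpa using hcyc
    have hyw : y ∈ w := by rw [hwdec]; simp
    have hymem := hw.mem_iff.mp hyw
    rw [List.mem_range'_1] at hymem
    have hulen : (w.take c).length = c := by simp [hlen]
    by_cases hyc : y ≤ c
    · -- target Rw c (y+1)
      have hpsi : Rw c (y + 1) =
          [] ++ (List.range' (y + 1) (c + 1 - y) ++ List.range' 1 (y - 1)) ++ [y] := by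
        unfold Rw
        rw [show c + 2 - (y + 1) = c + 1 - y by omega, show y + 1 - 1 = y by omega,
          range'_split 1 y (y - 1) (by omega), show 1 + (y - 1) = y by omega,
          show y - (y - 1) = 1 by omega, List.range'_one]
        simp [List.append_assoc]
      refine ⟨y + 1, by omega, by omega, Relation.EqvGen.rel _ _ ?_⟩
      refine mkStep [] (w.take c)
        (List.range' (y + 1) (c + 1 - y) ++ List.range' 1 (y - 1)) [y]
        (by simpa using hwdec) hpsi (by simp [hulen]) ?_ hcyc' ?_
      · -- perm
        have hp : (w.take c ++ [y]).Perm
            ((List.range' (y + 1) (c + 1 - y) ++ List.range' 1 (y - 1)) ++ [y]) := by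
          have := hw.trans (Rw_perm c (y + 1) (by omega) (by omega)).symm
          rw [hwdec, hpsi] at this
          simpa using this
        exact perm_cancel_right y hp
      · refine cyc_intro c (y - 1) (by omega) _ ?_
        rw [S1 c y (by omega) (by omega)]
        congr 2 <;> omega
    · -- y = c + 1, target Rw c 1
      have hyv : y = c + 1 := by omega
      subst hyv
      have hpsi : Rw c 1 = [] ++ List.range' 1 c ++ [c + 1] := by
        unfold Rw
        rw [show c + 2 - 1 = c + 1 by omega, show (1:ℕ) - 1 = 0 by rfl,
          range'_split 1 (c + 1) c (by omega), show 1 + c = c + 1 by omega,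
          show c + 1 - c = 1 by omega, List.range'_one]
        simp
      refine ⟨1, le_rfl, by omega, Relation.EqvGen.rel _ _ ?_⟩
      refine mkStep [] (w.take c) (List.range' 1 c) [c + 1]
        (by simpa using hwdec) hpsi (by simp [hulen]) ?_ hcyc' ?_
      · have hp : (w.take c ++ [c + 1]).Perm (List.range' 1 c ++ [c + 1]) := by
          have := hw.trans (Rw_perm c 1 le_rfl (by omega)).symm
          rw [hwdec, hpsi] at this
          simpa using this
        exact perm_cancel_right _ hp
      · refine cyc_intro c 0 (by omega) _ ?_
        rw [S0 c]
        simp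
  · -- prefix case : last c letters form the cyclic factor
    obtain ⟨x, u, hxu⟩ := List.exists_cons_of_ne_nil
      (show w ≠ [] by intro h; rw [h] at hlen; simp at hlen)
    have hulen : u.length = c := by
      have := hlen; rw [hxu] at this; simpa using this
    have hcyc' : IsCyclicShiftOf (stdz u) (List.range' 1 c) := by
      rw [hxu] at hcyc
      simpa [List.take_of_length_le (le_of_eq hulen)] using hcyc
    have hxw : x ∈ w := by rw [hxu]; simp
    have hxmem := hw.mem_iff.mp hxw
    rw [List.mem_range'_1] at hxmem
    have hpsi : Rw c x =
        [x] ++ (List.range' (x + 1) (c + 1 - x) ++ List.range' 1 (x - 1)) ++ [] := by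
      unfold Rw
      rw [range'_split x (c + 2 - x) 1 (by omega),
        show c + 2 - x - 1 = c + 1 - x by omega, List.range'_one]
      simp [List.append_assoc]
    refine ⟨x, by omega, by omega, Relation.EqvGen.rel _ _ ?_⟩
    refine mkStep [x] u (List.range' (x + 1) (c + 1 - x) ++ List.range' 1 (x - 1)) []
      (by simp [hxu]) hpsi (by simp [hulen]) ?_ hcyc' ?_
    · have hp : (x :: u).Perm (x :: (List.range' (x + 1) (c + 1 - x) ++ List.range' 1 (x - 1))) := by
        have := hw.trans (Rw_perm c x (by omega) (by omega)).symm
        rw [hxu, hpsi] at this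
        simpa using this
      exact (List.perm_cons x).mp hp
    · refine cyc_intro c (x - 1) (by omega) _ ?_
      rw [S1 c x (by omega) (by omega)]
      congr 2 <;> omega


/-- For even `c` and `m` the identity of `S_c`, all non-avoiders of `S_{c+1}` form a single
equivalence class under the cyclic-shift replacement relation. -/
theorem stmt4 (c : ℕ) (hc : 2 ≤ c) (hce : Even c) (w v : List ℕ)
    (hw : w.Perm (List.range' 1 (c + 1))) (hv : v.Perm (List.range' 1 (c + 1)))
    (hnw : NonAvoider (List.range' 1 c) w) (hnv : NonAvoider (List.range' 1 c) v) :
    Relation.EqvGen (StepCyc (List.range' 1 c)) w v := by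
  obtain ⟨x, hx1, hx2, hwx⟩ := toCanon c hc w hw hnw
  obtain ⟨y, hy1, hy2, hvy⟩ := toCanon c hc v hv hnv
  have h1 := reachAll c hc hce x hx1 hx2
  have h2 := reachAll c hc hce y hy1 hy2
  exact hwx.trans _ _ _ ((h1.symm _ _).trans _ _ _ (h2.trans _ _ _ (hvy.symm _ _)))
end

section
/- Let c ≥ 2, m ∈ S_c, and consider the equivalence on S_n generated by replacing contiguous length-c factors whose standardizations are cyclic shifts of m by rearrangements whose standardizations are also cyclic shifts of m. For any j with 1 ≤ j ≤ n−1 and n = c+1: (j ⇀ m) ≡ (m ↼ (j+1)) and (m ↼ j) ≡ ((j+1) ⇀ m), where i ⇀ w denotes the word obtained from w by incrementing all letters ≥ i and prepending i, and w ↼ i denotes incrementing all letters ≥ i and appending i on the right. -/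
/-- `i ⇀ w`: increment every letter of `w` that is `≥ i`, then prepend `i`. -/
def harpL (i : ℕ) (w : List ℕ) : List ℕ :=
  i :: w.map (fun x => if i ≤ x then x + 1 else x)

/-- `w ↼ i`: increment every letter of `w` that is `≥ i`, then append `i` on the right. -/
def harpR (w : List ℕ) (i : ℕ) : List ℕ :=
  w.map (fun x => if i ≤ x then x + 1 else x) ++ [i]

/-- The incrementation map used in `harpL`/`harpR`. -/
def Fm (i x : ℕ) : ℕ := if i ≤ x then x + 1 else x

lemma Fm_lt (i : ℕ) : ∀ a b : ℕ, Fm i a < Fm i b ↔ a < b := by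
  intro a b; unfold Fm; split_ifs <;> omega

lemma stdz_map (w : List ℕ) (f : ℕ → ℕ) (hf : ∀ a b : ℕ, f a < f b ↔ a < b) :
    stdz (w.map f) = stdz w := by
  unfold stdz
  rw [List.map_map]
  refine List.map_congr_left fun x hx => ?_
  simp only [List.countP_map, Function.comp_apply]
  have h : List.countP ((fun y => decide (y < f x)) ∘ f) w =
      List.countP (fun y => decide (y < x)) w := by
    apply List.countP_congr
    intro y hy
    simp [Function.comp, hf]
  rw [h]

lemma countP_range'_lt (c x : ℕ) (hx : 1 ≤ x) (hx2 : x ≤ c) :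
    (List.range' 1 c).countP (fun y => decide (y < x)) = x - 1 := by
  induction c with
  | zero => omega
  | succ n ih =>
    rw [List.range'_concat, List.countP_append]
    rcases Nat.lt_or_ge x (n + 1) with h | h
    · have := ih (by omega)
      simp [this]
      omega
    · have hx' : x = n + 1 := by omega
      subst hx'
      have hall : (List.range' 1 n).countP (fun y => decide (y < n + 1)) =
          (List.range' 1 n).length := by
        rw [List.countP_eq_length]
        intro a ha
        rw [List.mem_range'_1] at ha
        simp; omega
      rw [hall]
      simp

lemma stdz_self (c : ℕ) (w : List ℕ) (hw : w.Perm (List.range' 1 c)) : stdz w = w := by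
  unfold stdz
  conv_rhs => rw [← List.map_id w]
  refine List.map_congr_left fun x hx => ?_
  have hx' : x ∈ List.range' 1 c := hw.mem_iff.mp hx
  rw [List.mem_range'_1] at hx'
  rw [hw.countP_eq, countP_range'_lt c x hx'.1 (by omega)]
  simp; omega

/-- Rotating the core block of length `c` is a single `StepCyc` move. -/
lemma step_rot (c : ℕ) (m : List ℕ) (hm : m.Perm (List.range' 1 c))
    (i a : ℕ) (ha : a ≤ m.length) (pre post : List ℕ) :
    StepCyc m (pre ++ m.map (Fm i) ++ post) (pre ++ (m.rotate a).map (Fm i) ++ post) := by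
  refine ⟨pre, m.map (Fm i), (m.rotate a).map (Fm i), post, rfl, rfl, by simp,
    ((m.rotate_perm a).symm.map _), ?_, ?_⟩
  · rw [stdz_map _ _ (Fm_lt i), stdz_self c m hm]
    exact ⟨0, Nat.zero_le _, by simp⟩
  · rw [stdz_map _ _ (Fm_lt i), stdz_self c _ ((m.rotate_perm a).trans hm)]
    exact ⟨a, ha, rfl⟩

/-- For `m ∈ S_c` and `n = c + 1`: for every `1 ≤ j ≤ n - 1`, we have
`(j ⇀ m) ≡ (m ↼ (j+1))` and `(m ↼ j) ≡ ((j+1) ⇀ m)` under the cyclic-shift replacement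
relation attached to `m`. -/
theorem stmt5 (c : ℕ) (hc : 2 ≤ c) (m : List ℕ) (hm : m.Perm (List.range' 1 c))
    (j : ℕ) (hj1 : 1 ≤ j) (hj2 : j ≤ (c + 1) - 1) :
    Relation.EqvGen (StepCyc m) (harpL j m) (harpR m (j + 1)) ∧
    Relation.EqvGen (StepCyc m) (harpR m j) (harpL (j + 1) m) := by
  -- j occurs in m
  have hjm : j ∈ m := hm.mem_iff.mpr (List.mem_range'_1.mpr ⟨hj1, by omega⟩)
  obtain ⟨p, q, hmq⟩ := List.append_of_mem hjm
  have hnd : m.Nodup := hm.nodup_iff.mpr List.nodup_range'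
  have hjq : j ∉ q ∧ j ∉ p := by
    rw [hmq] at hnd
    constructor
    · exact fun h => (List.nodup_append'.mp hnd).2.1.notMem h
    · exact fun h => (List.nodup_append'.mp hnd).2.2 h List.mem_cons_self
  have hlen : m.length = p.length + 1 + q.length := by
    rw [hmq]; simp; omega
  -- the two rotations of m
  have hr2 : m.rotate p.length = j :: (q ++ p) := by
    rw [hmq, List.rotate_eq_drop_append_take (by simp)]
    rw [List.drop_left' rfl, List.take_left' rfl]
    simp
  have hr1 : m.rotate (p.length + 1) = (q ++ p) ++ [j] := by
    have hmq' : m = (p ++ [j]) ++ q := by rw [hmq]; simp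
    rw [hmq', List.rotate_eq_drop_append_take (by simp)]
    have hl : p.length + 1 = (p ++ [j]).length := by simp
    rw [hl, List.drop_left, List.take_left]
    simp
  -- map agreement away from j
  have hmapeq : (q ++ p).map (Fm j) = (q ++ p).map (Fm (j + 1)) := by
    refine List.map_congr_left fun x hx => ?_
    have hxj : x ≠ j := by
      rcases List.mem_append.mp hx with h | h
      · exact fun he => hjq.1 (he ▸ h)
      · exact fun he => hjq.2 (he ▸ h)
    unfold Fm; split_ifs <;> omega
  have hFjj : Fm j j = j + 1 := by unfold Fm; simp
  have hFj1j : Fm (j + 1) j = j := by unfold Fm; simp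
  -- the middle word for part 1
  have hmid1 : [j] ++ (m.rotate (p.length + 1)).map (Fm j) ++ ([] : List ℕ) =
      ([] : List ℕ) ++ (m.rotate p.length).map (Fm (j + 1)) ++ [j + 1] := by
    rw [hr1, hr2]
    simp only [List.map_append, List.map_cons, List.map_nil, hFjj, hFj1j, List.nil_append,
      List.append_nil, List.cons_append, hmapeq]
  -- the middle word for part 2
  have hmid2 : ([] : List ℕ) ++ (m.rotate p.length).map (Fm j) ++ [j] =
      [j + 1] ++ (m.rotate (p.length + 1)).map (Fm (j + 1)) ++ ([] : List ℕ) := by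
    rw [hr1, hr2]
    simp only [List.map_append, List.map_cons, List.map_nil, hFjj, hFj1j, List.nil_append,
      List.append_nil, List.cons_append, hmapeq]
  have eL : ∀ i : ℕ, harpL i m = [i] ++ m.map (Fm i) ++ ([] : List ℕ) := by
    intro i; simp [harpL, Fm]
  have eR : ∀ i : ℕ, harpR m i = ([] : List ℕ) ++ m.map (Fm i) ++ [i] := by
    intro i; simp [harpR, Fm]
  constructor
  · -- harpL j m ≡ harpR m (j+1)
    have s1 : StepCyc m (harpL j m) ([j] ++ (m.rotate (p.length + 1)).map (Fm j) ++ []) := by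
      rw [eL j]; exact step_rot c m hm j (p.length + 1) (by omega) [j] []
    have s2 : StepCyc m (harpR m (j + 1))
        (([] : List ℕ) ++ (m.rotate p.length).map (Fm (j + 1)) ++ [j + 1]) := by
      rw [eR (j + 1)]; exact step_rot c m hm (j + 1) p.length (by omega) [] [j + 1]
    refine Relation.EqvGen.trans _ _ _ (Relation.EqvGen.rel _ _ s1) ?_
    rw [hmid1]
    exact Relation.EqvGen.symm _ _ (Relation.EqvGen.rel _ _ s2)
  · -- harpR m j ≡ harpL (j+1) m
    have s1 : StepCyc m (harpR m j) (([] : List ℕ) ++ (m.rotate p.length).map (Fm j) ++ [j]) := by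
      rw [eR j]; exact step_rot c m hm j p.length (by omega) [] [j]
    have s2 : StepCyc m (harpL (j + 1) m)
        ([j + 1] ++ (m.rotate (p.length + 1)).map (Fm (j + 1)) ++ ([] : List ℕ)) := by
      rw [eL (j + 1)]; exact step_rot c m hm (j + 1) (p.length + 1) (by omega) [j + 1] []
    refine Relation.EqvGen.trans _ _ _ (Relation.EqvGen.rel _ _ s1) ?_
    rw [hmid2]
    exact Relation.EqvGen.symm _ _ (Relation.EqvGen.rel _ _ s2)
end

section
/- Fix an odd integer c ≥ 3 and n even with n > c, and let the 'hit' pattern set be the cyclic shifts of the identity of S_c. Then the number of even permutations in S_n containing at least one contiguous factor of length c whose standardization is a cyclic shift of the identity equals the number of odd such permutations. -/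
/-- The number of inversions of a word. -/
def inv (w : List ℕ) : ℕ :=
  ((Finset.range w.length ×ˢ Finset.range w.length).filter
    (fun p => p.1 < p.2 ∧ w.getD p.2 0 < w.getD p.1 0)).card

/-- Boolean test: `u` is a cyclic shift of `m`. -/
def isCycShiftB (u m : List ℕ) : Bool :=
  (List.range (m.length + 1)).any (fun a => u == m.rotate a)

/-- Boolean test: the contiguous factor of `w` of length `c` starting at (0-indexed)
position `i` is a hit, i.e. its standardization is a cyclic shift of the identity of `S_c`. -/
def hitAtB (c : ℕ) (w : List ℕ) (i : ℕ) : Bool :=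
  decide (i + c ≤ w.length) && isCycShiftB (stdz ((w.drop i).take c)) (List.range' 1 c)

/-- Boolean test: `w` is a non-avoider (has at least one hit). -/
def hasHitB (c : ℕ) (w : List ℕ) : Bool :=
  (List.range (w.length + 1)).any (hitAtB c w)

lemma countP_or_disjoint (l : List ℕ) (p q : ℕ → Bool) (h : ∀ x ∈ l, ¬(p x = true ∧ q x = true)) :
    l.countP (fun x => p x || q x) = l.countP p + l.countP q := by
  induction l with
  | nil => simp
  | cons a t ih =>
    have ha := h a (by simp)
    have ht : ∀ x ∈ t, ¬(p x = true ∧ q x = true) := fun x hx => h x (by simp [hx])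
    by_cases hp : p a = true <;> by_cases hq : q a = true
    · exact absurd ⟨hp, hq⟩ ha
    all_goals simp [List.countP_cons, hp, hq, ih ht] <;> omega
lemma two_le_countP (l : List ℕ) (hl : l.Nodup) (a b : ℕ) (ha : a ∈ l) (hb : b ∈ l)
    (hab : a ≠ b) (hpa : q a = true) (hpb : q b = true) : 2 ≤ l.countP q := by
  rw [List.countP_eq_length_filter, ← List.toFinset_card_of_nodup (hl.filter q)]
  have : ({a, b} : Finset ℕ) ⊆ (l.filter q).toFinset := by
    intro x hx
    simp only [Finset.mem_insert, Finset.mem_singleton] at hx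
    rcases hx with rfl | rfl <;> simp [List.mem_toFinset, List.mem_filter, ha, hb, hpa, hpb]
  calc 2 = ({a, b} : Finset ℕ).card := (Finset.card_pair hab).symm
    _ ≤ _ := Finset.card_le_card this
lemma stdz_entry (u : List ℕ) (x : ℕ) (hx : x ∈ stdz u) : 1 ≤ x ∧ x ≤ u.length := by
  simp only [stdz, List.mem_map] at hx
  obtain ⟨a, ha, rfl⟩ := hx
  refine ⟨by omega, ?_⟩
  have h1 := List.length_eq_countP_add_countP (fun y => decide (y < a)) (l := u)
  have h2 : 0 < u.countP (fun y => decide (¬(decide (y < a)) = true)) :=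
    List.countP_pos_iff.mpr ⟨a, ha, by simp⟩
  omega
lemma stdz_length (u : List ℕ) : (stdz u).length = u.length := by simp [stdz]

/-- shift: x ↦ x+1 cyclically on [1,n] -/
lemma sh_eq {n x : ℕ} (h1 : 1 ≤ x) (h2 : x ≤ n) : x % n + 1 = if x = n then 1 else x + 1 := by
  rcases eq_or_lt_of_le h2 with rfl | h
  · simp [Nat.mod_self]
  · rw [Nat.mod_eq_of_lt h, if_neg (by omega)]
lemma sh_lt {n x y : ℕ} (hx1 : 1 ≤ x) (hx2 : x ≤ n) (hy1 : 1 ≤ y) (hy2 : y ≤ n) :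
    (x % n + 1 < y % n + 1) ↔ (y ≠ n ∧ (x = n ∨ x < y)) := by
  rw [sh_eq hx1 hx2, sh_eq hy1 hy2]
  split_ifs with h1 h2 h2 <;> omega
lemma stdz_map_of_not_mem {n : ℕ} (u : List ℕ) (hu : ∀ x ∈ u, 1 ≤ x ∧ x ≤ n)
    (hn : n ∉ u) : stdz (u.map (fun x => x % n + 1)) = stdz u := by
  unfold stdz
  rw [List.map_map]
  apply List.map_congr_left
  intro x hx
  simp only [Function.comp]
  rw [List.countP_map]
  congr 1
  apply List.countP_congr
  intro y hy
  obtain ⟨hx1, hx2⟩ := hu x hx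
  obtain ⟨hy1, hy2⟩ := hu y hy
  have hxn : x ≠ n := fun h => hn (h ▸ hx)
  have hyn : y ≠ n := fun h => hn (h ▸ hy)
  simp only [Function.comp, decide_eq_true_eq]
  rw [sh_lt hy1 hy2 hx1 hx2]
  omega
lemma stdz_map_of_mem {n : ℕ} (u : List ℕ) (hnd : u.Nodup) (hu : ∀ x ∈ u, 1 ≤ x ∧ x ≤ n)
    (hn : n ∈ u) :
    stdz (u.map (fun x => x % n + 1)) =
      (stdz u).map (fun v => if v = u.length then 1 else v + 1) := by
  unfold stdz
  rw [List.map_map, List.map_map]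
  apply List.map_congr_left
  intro x hx
  obtain ⟨hx1, hx2⟩ := hu x hx
  simp only [Function.comp]
  rw [List.countP_map]
  by_cases hxn : x = n
  · subst hxn
    have hc0 : u.countP ((fun y => decide (y < x % x + 1)) ∘ (fun z => z % x + 1)) = 0 := by
      rw [List.countP_eq_zero]
      intro a ha
      obtain ⟨ha1, ha2⟩ := hu a ha
      simp only [Function.comp, decide_eq_true_eq]
      rw [sh_lt ha1 ha2 hx1 hx2]
      omega
    rw [hc0]
    have hcnt : u.countP (fun y => decide (y < x)) = u.length - 1 := by
      have h1 := List.length_eq_countP_add_countP (fun y => decide (y < x)) (l := u)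
      have h2 : u.countP (fun a => decide (¬(decide (a < x)) = true)) = 1 := by
        have hcongr : u.countP (fun a => decide (¬(decide (a < x)) = true)) =
            u.countP (fun a => a == x) := by
          apply List.countP_congr
          intro a ha
          obtain ⟨ha1, ha2⟩ := hu a ha
          simp only [decide_eq_true_eq, beq_iff_eq, decide_not, Bool.not_eq_true',
            decide_eq_false_iff_not]
          omega
        rw [hcongr, ← List.count, List.count_eq_one_of_mem hnd hn]
      omega
    have hlen : 1 ≤ u.length := List.length_pos_iff.mpr (List.ne_nil_of_mem hn)
    rw [hcnt, if_pos (by omega)]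
  · -- x ≠ n, so x < n
    have hxlt : x < n := lt_of_le_of_ne hx2 hxn
    have hstep : u.countP ((fun y => decide (y < x % n + 1)) ∘ (fun x => x % n + 1)) =
        u.countP (fun y => decide (y < x)) + 1 := by
      have hcongr : u.countP ((fun y => decide (y < x % n + 1)) ∘ (fun x => x % n + 1)) =
          u.countP (fun y => decide (y < x) || (y == n)) := by
        apply List.countP_congr
        intro a ha
        obtain ⟨ha1, ha2⟩ := hu a ha
        simp only [Function.comp, decide_eq_true_eq, Bool.or_eq_true, beq_iff_eq]
        rw [sh_lt ha1 ha2 hx1 hx2]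
        omega
      rw [hcongr, countP_or_disjoint]
      · rw [← List.count, List.count_eq_one_of_mem hnd hn]
      · intro a ha
        simp only [decide_eq_true_eq, beq_iff_eq]
        omega
    rw [hstep]
    have hub : u.countP (fun y => decide (y < x)) + 2 ≤ u.length := by
      have h1 := List.length_eq_countP_add_countP (fun y => decide (y < x)) (l := u)
      have h2 : 2 ≤ u.countP (fun a => decide (¬(decide (a < x)) = true)) := by
        apply two_le_countP u hnd x n hx hn hxn <;> simp <;> omega
      omega
    rw [if_neg (by omega)]
    omega
lemma isCycShiftB_iff (u m : List ℕ) :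
    isCycShiftB u m = true ↔ ∃ a, a < m.length + 1 ∧ u = m.rotate a := by
  simp [isCycShiftB, List.any_eq_true, List.mem_range]
lemma map_vc_range' (c : ℕ) (hc : 1 ≤ c) :
    (List.range' 1 c).map (fun v => if v = c then 1 else v + 1) = (List.range' 1 c).rotate 1 := by
  obtain ⟨k, rfl⟩ : ∃ k, c = k + 1 := ⟨c - 1, by omega⟩
  have h1 : List.range' 1 (k + 1) = 1 :: List.range' 2 k := by
    rw [List.range'_succ]
  have h2 : List.range' 1 (k + 1) = List.range' 1 k ++ [k + 1] := by
    have := List.range'_concat (step := 1) (s := 1) (n := k)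
    simpa [Nat.add_comm] using this
  have h3 : (List.range' 1 k).map (fun v => if v = k + 1 then 1 else v + 1) =
      List.range' 2 k := by
    have h4 : List.map (fun v => 1 + v) (List.range' 1 k) = List.range' 2 k := by
      simpa using List.map_add_range' (a := 1) 1 k 1
    rw [← h4]
    apply List.map_congr_left
    intro a ha
    rw [List.mem_range'_1] at ha
    rw [if_neg (by omega)]
    omega
  nth_rewrite 1 [h2]
  rw [List.map_append, h3]
  rw [h1, List.rotate_cons_succ, List.rotate_zero]
  simp
lemma map_ivc_range' (c : ℕ) (hc : 1 ≤ c) :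
    (List.range' 1 c).map (fun v => if v = 1 then c else v - 1) =
      (List.range' 1 c).rotate (c - 1) := by
  obtain ⟨k, rfl⟩ : ∃ k, c = k + 1 := ⟨c - 1, by omega⟩
  have h1 : List.range' 1 (k + 1) = 1 :: List.range' 2 k := by rw [List.range'_succ]
  have h2 : List.range' 1 (k + 1) = List.range' 1 k ++ [k + 1] := by
    have := List.range'_concat (step := 1) (s := 1) (n := k)
    simpa [Nat.add_comm] using this
  have h3 : (List.range' 2 k).map (fun v => if v = 1 then k + 1 else v - 1) =
      List.range' 1 k := by
    have h4 : List.range' 2 k = (List.range' 1 k).map (fun v => 1 + v) := by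
      simpa using (List.map_add_range' (a := 1) 1 k 1).symm
    rw [h4, List.map_map]
    nth_rewrite 2 [show List.range' 1 k = (List.range' 1 k).map id from (List.map_id _).symm]
    apply List.map_congr_left
    intro a ha
    rw [List.mem_range'_1] at ha
    simp only [Function.comp, id]
    rw [if_neg (by omega)]
    omega
  have hl : (List.range' 1 k).length = k := by simp
  have hrot : (List.range' 1 (k + 1)).rotate k = (k + 1) :: List.range' 1 k := by
    rw [List.rotate_eq_drop_append_take (by simp), h2,
      List.drop_append_of_le_length (by simp), List.take_append_of_le_length (by simp)]
    rw [List.drop_eq_nil_of_le (by simp), List.take_of_length_le (by simp)]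
    simp
  rw [show k + 1 - 1 = k from rfl, hrot]
  nth_rewrite 1 [h1]
  simp [h3]
lemma isCyc_map_vc (c : ℕ) (hc : 1 ≤ c) (p : List ℕ) (hp : ∀ x ∈ p, 1 ≤ x ∧ x ≤ c) :
    isCycShiftB (p.map (fun v => if v = c then 1 else v + 1)) (List.range' 1 c) =
      isCycShiftB p (List.range' 1 c) := by
  have hlen : (List.range' 1 c).length = c := by simp
  rw [Bool.eq_iff_iff, isCycShiftB_iff, isCycShiftB_iff]
  constructor
  · rintro ⟨b, hb, hrot⟩
    have hip : p = (p.map (fun v => if v = c then 1 else v + 1)).map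
        (fun v => if v = 1 then c else v - 1) := by
      rw [List.map_map]
      nth_rewrite 1 [show p = p.map id from (List.map_id p).symm]
      apply List.map_congr_left
      intro a ha
      obtain ⟨ha1, ha2⟩ := hp a ha
      simp only [Function.comp, id]
      split_ifs with h1 h2 h2 <;> omega
    rw [hrot, List.map_rotate, map_ivc_range' c hc, List.rotate_rotate] at hip
    refine ⟨(c - 1 + b) % c, ?_, ?_⟩
    · have := Nat.mod_lt (c - 1 + b) (show 0 < c by omega)
      omega
    · rw [hip, show (c - 1 + b) % c = (c - 1 + b) % (List.range' 1 c).length by rw [hlen],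
        List.rotate_mod]
  · rintro ⟨a, ha, hrot⟩
    refine ⟨(1 + a) % c, ?_, ?_⟩
    · have := Nat.mod_lt (1 + a) (show 0 < c by omega)
      omega
    · rw [hrot, List.map_rotate, map_vc_range' c hc, List.rotate_rotate,
        show (1 + a) % c = (1 + a) % (List.range' 1 c).length by rw [hlen],
        List.rotate_mod]
lemma hitAt_map (c n : ℕ) (hc : 1 ≤ c) (w : List ℕ) (hw : w.Nodup)
    (hmem : ∀ x ∈ w, 1 ≤ x ∧ x ≤ n) (i : ℕ) :
    hitAtB c (w.map (fun x => x % n + 1)) i = hitAtB c w i := by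
  unfold hitAtB
  rw [List.length_map]
  by_cases hic : i + c ≤ w.length
  · rw [← List.map_drop, ← List.map_take]
    set u := (w.drop i).take c with hu
    have hsub : u.Sublist w := (List.take_sublist _ _).trans (List.drop_sublist _ _)
    have hund : u.Nodup := hsub.nodup hw
    have humem : ∀ x ∈ u, 1 ≤ x ∧ x ≤ n := fun x hx => hmem x (hsub.mem hx)
    have hulen : u.length = c := by
      rw [hu, List.length_take, List.length_drop]
      omega
    by_cases hnu : n ∈ u
    · rw [stdz_map_of_mem u hund humem hnu, hulen]
      congr 1
      apply isCyc_map_vc c hc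
      intro x hx
      have := stdz_entry u x hx
      omega
    · rw [stdz_map_of_not_mem u humem hnu]
  · simp [decide_eq_false hic]
lemma hasHit_map (c n : ℕ) (hc : 1 ≤ c) (w : List ℕ) (hw : w.Nodup)
    (hmem : ∀ x ∈ w, 1 ≤ x ∧ x ≤ n) :
    hasHitB c (w.map (fun x => x % n + 1)) = hasHitB c w := by
  unfold hasHitB
  rw [List.length_map]
  rw [Bool.eq_iff_iff]
  simp only [List.any_eq_true]
  constructor
  · rintro ⟨i, hi, h⟩
    exact ⟨i, hi, by rwa [hitAt_map c n hc w hw hmem i] at h⟩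
  · rintro ⟨i, hi, h⟩
    exact ⟨i, hi, by rwa [hitAt_map c n hc w hw hmem i]⟩
lemma inv_map_parity (n : ℕ) (hne : Even n) (hn : 1 ≤ n) (w : List ℕ)
    (hw : w.Perm (List.range' 1 n)) :
    Even (inv (w.map (fun x => x % n + 1))) ↔ ¬ Even (inv w) := by
  have hlen : w.length = n := by rw [hw.length_eq]; simp
  have hnd : w.Nodup := hw.nodup_iff.mpr (List.nodup_range' (s := 1) (n := n))
  have hmem : ∀ x ∈ w, 1 ≤ x ∧ x ≤ n := by
    intro x hx
    have := hw.subset hx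
    rw [List.mem_range'_1] at this
    omega
  have hnw : n ∈ w := hw.mem_iff.mpr (by rw [List.mem_range'_1]; omega)
  set k := w.idxOf n with hkdef
  have hk : k < n := by rw [← hlen]; exact List.idxOf_lt_length_iff.mpr hnw
  have hak : w.getD k 0 = n := by
    rw [List.getD_eq_getElem _ _ (by omega), List.getElem_idxOf (by omega)]
  have habd : ∀ i, i < n → 1 ≤ w.getD i 0 ∧ w.getD i 0 ≤ n := by
    intro i hi
    rw [List.getD_eq_getElem _ _ (by omega)]
    exact hmem _ (List.getElem_mem _)
  have haeq : ∀ i, i < n → (w.getD i 0 = n ↔ i = k) := by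
    intro i hi
    constructor
    · intro h
      have h2 : w[i]'(by omega) = w[k]'(by omega) := by
        rw [← List.getD_eq_getElem w 0 (by omega), ← List.getD_eq_getElem w 0 (by omega), h, hak]
      exact (hnd.getElem_inj_iff).mp h2
    · rintro rfl; exact hak
  set R := Finset.range n ×ˢ Finset.range n with hR
  set X := R.filter (fun p => p.1 < p.2 ∧ w.getD p.2 0 < w.getD p.1 0 ∧
      w.getD p.1 0 ≠ n ∧ w.getD p.2 0 ≠ n) with hX
  set A := R.filter (fun p => p.1 < p.2 ∧ p.1 = k) with hA
  set B := R.filter (fun p => p.1 < p.2 ∧ p.2 = k) with hB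
  have hdXA : Disjoint X A := by
    rw [Finset.disjoint_left]
    intro p hp hpA
    rw [hX, Finset.mem_filter] at hp
    rw [hA, Finset.mem_filter] at hpA
    obtain ⟨hpR, _, _, hp1, _⟩ := hp
    obtain ⟨hpR', _, hpk⟩ := hpA
    have hp1n : p.1 < n := by
      rw [hR, Finset.mem_product, Finset.mem_range, Finset.mem_range] at hpR
      exact hpR.1
    exact hp1 ((haeq p.1 hp1n).mpr hpk)
  have hdXB : Disjoint X B := by
    rw [Finset.disjoint_left]
    intro p hp hpB
    rw [hX, Finset.mem_filter] at hp
    rw [hB, Finset.mem_filter] at hpB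
    obtain ⟨hpR, _, _, _, hp2⟩ := hp
    obtain ⟨hpR', _, hpk⟩ := hpB
    have hp2n : p.2 < n := by
      rw [hR, Finset.mem_product, Finset.mem_range, Finset.mem_range] at hpR
      exact hpR.2
    exact hp2 ((haeq p.2 hp2n).mpr hpk)
  have h1 : inv w = X.card + A.card := by
    unfold inv
    rw [hlen, ← hR, ← Finset.card_union_of_disjoint hdXA]
    congr 1
    ext p
    simp only [Finset.mem_filter, Finset.mem_union, hX, hA, hR, Finset.mem_product,
      Finset.mem_range]
    constructor
    · rintro ⟨⟨hp1, hp2⟩, hlt, hinv⟩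
      by_cases h : w.getD p.1 0 = n
      · exact Or.inr ⟨⟨hp1, hp2⟩, hlt, (haeq p.1 hp1).mp h⟩
      · refine Or.inl ⟨⟨hp1, hp2⟩, hlt, hinv, h, fun h2 => ?_⟩
        have := (habd p.1 hp1).2
        omega
    · rintro (⟨⟨hp1, hp2⟩, hlt, hinv, _, _⟩ | ⟨⟨hp1, hp2⟩, hlt, hpk⟩)
      · exact ⟨⟨hp1, hp2⟩, hlt, hinv⟩
      · refine ⟨⟨hp1, hp2⟩, hlt, ?_⟩
        have e1 : w.getD p.1 0 = n := (haeq p.1 hp1).mpr hpk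
        have e2 : w.getD p.2 0 ≠ n := fun h => by
          have := (haeq p.2 hp2).mp h
          omega
        have := (habd p.2 hp2).2
        omega
  have hgd : ∀ i, i < n → (w.map (fun x => x % n + 1)).getD i 0 = (w.getD i 0) % n + 1 := by
    intro i hi
    rw [List.getD_eq_getElem _ _ (by rw [List.length_map]; omega), List.getElem_map,
      ← List.getD_eq_getElem w 0 (by omega)]
  have h2 : inv (w.map (fun x => x % n + 1)) = X.card + B.card := by
    unfold inv
    rw [List.length_map, hlen, ← hR, ← Finset.card_union_of_disjoint hdXB]
    congr 1
    ext p
    simp only [Finset.mem_filter, Finset.mem_union, hX, hB, hR, Finset.mem_product,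
      Finset.mem_range]
    constructor
    · rintro ⟨⟨hp1, hp2⟩, hlt, hinv⟩
      rw [hgd p.1 hp1, hgd p.2 hp2,
        sh_lt (habd p.2 hp2).1 (habd p.2 hp2).2 (habd p.1 hp1).1 (habd p.1 hp1).2] at hinv
      by_cases h : w.getD p.2 0 = n
      · exact Or.inr ⟨⟨hp1, hp2⟩, hlt, (haeq p.2 hp2).mp h⟩
      · refine Or.inl ⟨⟨hp1, hp2⟩, hlt, ?_, ?_, h⟩ <;> omega
    · rintro (⟨⟨hp1, hp2⟩, hlt, hinv, hn1, hn2⟩ | ⟨⟨hp1, hp2⟩, hlt, hpk⟩)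
      · refine ⟨⟨hp1, hp2⟩, hlt, ?_⟩
        rw [hgd p.1 hp1, hgd p.2 hp2,
          sh_lt (habd p.2 hp2).1 (habd p.2 hp2).2 (habd p.1 hp1).1 (habd p.1 hp1).2]
        omega
      · refine ⟨⟨hp1, hp2⟩, hlt, ?_⟩
        rw [hgd p.1 hp1, hgd p.2 hp2,
          sh_lt (habd p.2 hp2).1 (habd p.2 hp2).2 (habd p.1 hp1).1 (habd p.1 hp1).2]
        have e2 : w.getD p.2 0 = n := (haeq p.2 hp2).mpr hpk
        have e1 : w.getD p.1 0 ≠ n := fun h => by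
          have := (haeq p.1 hp1).mp h
          omega
        exact ⟨e1, Or.inl e2⟩
  have hcA : A.card = n - 1 - k := by
    have : A = {k} ×ˢ Finset.Ioo k n := by
      ext p
      simp only [hA, hR, Finset.mem_filter, Finset.mem_product, Finset.mem_range,
        Finset.mem_singleton, Finset.mem_Ioo]
      constructor
      · rintro ⟨⟨hp1, hp2⟩, hlt, hpk⟩
        exact ⟨hpk, by omega, hp2⟩
      · rintro ⟨hpk, hlt, hp2⟩
        exact ⟨⟨by omega, hp2⟩, by omega, hpk⟩
    rw [this, Finset.card_product, Finset.card_singleton, Nat.card_Ioo]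
    omega
  have hcB : B.card = k := by
    have : B = Finset.range k ×ˢ {k} := by
      ext p
      simp only [hB, hR, Finset.mem_filter, Finset.mem_product, Finset.mem_range,
        Finset.mem_singleton]
      constructor
      · rintro ⟨⟨hp1, hp2⟩, hlt, hpk⟩
        exact ⟨by omega, hpk⟩
      · rintro ⟨hp1, hpk⟩
        exact ⟨⟨by omega, by omega⟩, by omega, hpk⟩
    rw [this, Finset.card_product, Finset.card_singleton, Finset.card_range]
    omega
  obtain ⟨m, hm⟩ := hne
  rw [Nat.even_iff, Nat.even_iff]
  omega
lemma sh_tau {n y : ℕ} (h1 : 1 ≤ y) (h2 : y ≤ n) :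
    ((if y = 1 then n else y - 1) % n + 1) = y := by
  split_ifs with h
  · rw [Nat.mod_self]; omega
  · rw [Nat.mod_eq_of_lt (by omega)]; omega
lemma tau_sh {n x : ℕ} (h1 : 1 ≤ x) (h2 : x ≤ n) :
    (if (x % n + 1) = 1 then n else (x % n + 1) - 1) = x := by
  rw [sh_eq h1 h2]
  split_ifs with h h' h' <;> omega

/-- For odd `c ≥ 3` and even `n > c`, the number of even non-avoiders of `S_n` (with respect
to the cyclic shifts of the identity of `S_c`) equals the number of odd non-avoiders. -/
theorem stmt6 (c n : ℕ) (hc : 3 ≤ c) (hco : Odd c) (hne : Even n) (hcn : c < n) :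
    (List.range' 1 n).permutations.countP
        (fun w => hasHitB c w && decide (Even (inv w))) =
      (List.range' 1 n).permutations.countP
        (fun w => hasHitB c w && !decide (Even (inv w))) := by
  have hn1 : 1 ≤ n := by omega
  have hc1 : 1 ≤ c := by omega
  set L := (List.range' 1 n).permutations with hL
  have hLnd : L.Nodup := List.nodup_permutations _ (List.nodup_range' (s := 1) (n := n))
  have key : ∀ p : List ℕ → Bool,
      L.countP p = (L.toFinset.filter (fun w => p w = true)).card := by
    intro p
    rw [List.countP_eq_length_filter, ← List.toFinset_card_of_nodup (hLnd.filter p),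
      List.toFinset_filter]
  rw [key, key]
  have hnd : ∀ w : List ℕ, w.Perm (List.range' 1 n) → w.Nodup := fun w hw =>
    hw.nodup_iff.mpr (List.nodup_range' (s := 1) (n := n))
  have hbd : ∀ w : List ℕ, w.Perm (List.range' 1 n) → ∀ x ∈ w, 1 ≤ x ∧ x ≤ n := by
    intro w hw x hx
    have := hw.subset hx
    rw [List.mem_range'_1] at this
    omega
  have hms : (List.range' 1 n).map (fun x => x % n + 1) = (List.range' 1 n).rotate 1 := by
    rw [← map_vc_range' n hn1]
    apply List.map_congr_left
    intro x hx
    rw [List.mem_range'_1] at hx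
    exact sh_eq (by omega) (by omega)
  have hpermS : ∀ w : List ℕ, w.Perm (List.range' 1 n) →
      (w.map (fun x => x % n + 1)).Perm (List.range' 1 n) := by
    intro w hw
    exact ((hw.map _).trans (hms ▸ List.rotate_perm _ 1))
  have hinvmap : ∀ w : List ℕ, w.Perm (List.range' 1 n) →
      (w.map (fun x => x % n + 1)).map (fun y => if y = 1 then n else y - 1) = w := by
    intro w hw
    rw [List.map_map]
    nth_rewrite 2 [show w = w.map id from (List.map_id w).symm]
    apply List.map_congr_left
    intro x hx
    obtain ⟨h1, h2⟩ := hbd w hw x hx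
    simp only [Function.comp, id]
    exact tau_sh h1 h2
  apply Finset.card_bij (fun w _ => w.map (fun x => x % n + 1))
  · intro w hw
    rw [Finset.mem_filter] at hw ⊢
    obtain ⟨hwL, hwp⟩ := hw
    have hperm : w.Perm (List.range' 1 n) := List.mem_permutations.mp (List.mem_toFinset.mp hwL)
    simp only [Bool.and_eq_true, decide_eq_true_eq] at hwp
    refine ⟨List.mem_toFinset.mpr (List.mem_permutations.mpr (hpermS w hperm)), ?_⟩
    simp only [Bool.and_eq_true, Bool.not_eq_true', decide_eq_false_iff_not]
    constructor
    · rw [hasHit_map c n hc1 w (hnd w hperm) (hbd w hperm)]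
      exact hwp.1
    · rw [inv_map_parity n hne hn1 w hperm]
      exact fun h => h hwp.2
  · intro w1 h1 w2 h2 heq
    rw [← hinvmap w1 (List.mem_permutations.mp (List.mem_toFinset.mp (Finset.mem_filter.mp h1).1)),
      heq, hinvmap w2 (List.mem_permutations.mp (List.mem_toFinset.mp (Finset.mem_filter.mp h2).1))]
  · intro b hb
    rw [Finset.mem_filter] at hb
    obtain ⟨hbL, hbp⟩ := hb
    have hbperm : b.Perm (List.range' 1 n) := List.mem_permutations.mp (List.mem_toFinset.mp hbL)
    simp only [Bool.and_eq_true, Bool.not_eq_true', decide_eq_false_iff_not] at hbp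
    set a := b.map (fun y => if y = 1 then n else y - 1) with ha
    have hmt : (List.range' 1 n).map (fun y => if y = 1 then n else y - 1) =
        (List.range' 1 n).rotate (n - 1) := map_ivc_range' n hn1
    have hap : a.Perm (List.range' 1 n) :=
      (hbperm.map _).trans (hmt ▸ List.rotate_perm _ (n - 1))
    have hab : a.map (fun x => x % n + 1) = b := by
      rw [ha, List.map_map]
      nth_rewrite 2 [show b = b.map id from (List.map_id b).symm]
      apply List.map_congr_left
      intro y hy
      obtain ⟨h1, h2⟩ := hbd b hbperm y hy
      simp only [Function.comp, id]
      exact sh_tau h1 h2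
    refine ⟨a, ?_, hab⟩
    rw [Finset.mem_filter]
    refine ⟨List.mem_toFinset.mpr (List.mem_permutations.mpr hap), ?_⟩
    simp only [Bool.and_eq_true, decide_eq_true_eq]
    have hhit := hasHit_map c n hc1 a (hnd a hap) (hbd a hap)
    rw [hab] at hhit
    have hpar := inv_map_parity n hne hn1 a hap
    rw [hab] at hpar
    exact ⟨hhit ▸ hbp.1, by tauto⟩
end
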